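/- Let D ⊆ F_q with |D| = n > k. Any word u ∈ F_q^n whose Lagrange interpolating polynomial has degree exactly k is a deep hole of RS_q(D,k), i.e., d(u, RS_q(D,k)) = n - k. -/
import Mathlib


/-- Error distance of a word `u` to a code `C`. -/
noncomputable def errDist {ι F : Type*} [Fintype ι] [DecidableEq F]
    (u : ι → F) (C : Set (ι → F)) : ℕ :=
  sInf ((fun c => hammingDist u c) '' C)

/-- The Reed-Solomon code with evaluation set `D` and dimension `k`. -/
noncomputable def RSCode {F : Type*} [Field F] (D : Finset F) (k : ℕ) : Set (D → F) :=
  {v | ∃ f : Polynomial F, f.degree < k ∧ ∀ α : D, v α = f.eval (α : F)}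

theorem stmt2 {F : Type*} [Field F] [Fintype F] [DecidableEq F]
    (D : Finset F) (k : ℕ) (hk : k < D.card)
    (u : D → F) (uP : Polynomial F)
    (hdeg : uP.degree = (k : ℕ))
    (hint : ∀ α : D, uP.eval (α : F) = u α) :
    errDist u (RSCode D k) = D.card - k := by
  have hcardD : Fintype.card D = D.card := Fintype.card_coe D
  -- key cardinality fact : for α : D, filter over attach
  have hfiltS : ∀ S : Finset F, S ⊆ D →
      (Finset.univ.filter fun α : D => (α : F) ∈ S).card = S.card := by
    intro S hS
    refine Finset.card_bij (fun α _ => (α : F)) ?_ ?_ ?_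
    · intro a ha; exact (Finset.mem_filter.mp ha).2
    · intro a _ b _ h; exact Subtype.ext h
    · intro b hb; exact ⟨⟨b, hS hb⟩, Finset.mem_filter.mpr ⟨Finset.mem_univ _, hb⟩, rfl⟩
  apply le_antisymm
  · -- upper bound: construct a codeword at distance ≤ n - k
    obtain ⟨S, hSD, hScard⟩ := Finset.exists_subset_card_eq hk.le
    have hinj : Set.InjOn (id : F → F) S := Function.injective_id.injOn
    set f : Polynomial F := Lagrange.interpolate S id (fun x => uP.eval x) with hf
    have hdegf : f.degree < (k : ℕ) := by
      have := Lagrange.degree_interpolate_lt (fun x => uP.eval x) hinj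
      rwa [hScard] at this
    set c : D → F := fun α => f.eval (α : F) with hc
    have hcmem : c ∈ RSCode D k := ⟨f, hdegf, fun α => rfl⟩
    have hdist : hammingDist u c ≤ D.card - k := by
      have hsub : (Finset.univ.filter fun α : D => u α ≠ c α) ⊆
          Finset.univ.filter fun α : D => (α : F) ∉ S := by
        intro α hα
        simp only [Finset.mem_filter, Finset.mem_univ, true_and] at hα ⊢
        intro hαS
        apply hα
        have := Lagrange.eval_interpolate_at_node (fun x => uP.eval x) hinj hαS
        simp only [id] at this
        rw [hc]; simp only [← hint α, hf, this]
      calc hammingDist u c ≤ (Finset.univ.filter fun α : D => (α : F) ∉ S).card :=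
            Finset.card_le_card hsub
        _ = D.card - k := by
            have := Finset.card_filter_add_card_filter_not
              (s := (Finset.univ : Finset D)) (p := fun α : D => (α : F) ∈ S)
            simp only [Finset.card_univ, hcardD, hfiltS S hSD, hScard] at this
            omega
    calc errDist u (RSCode D k) ≤ hammingDist u c :=
          Nat.sInf_le ⟨c, hcmem, rfl⟩
      _ ≤ D.card - k := hdist
  · -- lower bound
    apply le_csInf
    · refine ⟨hammingDist u (fun _ => 0), ⟨fun _ => 0, ⟨0, ?_, fun α => by simp⟩, rfl⟩⟩
      rw [Polynomial.degree_zero]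
      exact WithBot.bot_lt_coe _
    rintro d ⟨c, ⟨f, hdegf, hcf⟩, rfl⟩
    set g : Polynomial F := uP - f with hg
    have hdegg : g.degree = (k : ℕ) := by
      rw [hg, Polynomial.degree_sub_eq_left_of_degree_lt (by rw [hdeg]; exact hdegf), hdeg]
    have hg0 : g ≠ 0 := fun h => by simp [h] at hdegg
    have hagree : (Finset.univ.filter fun α : D => ¬ u α ≠ c α).card ≤ k := by
      set Z : Finset F := (Finset.univ.filter fun α : D => ¬ u α ≠ c α).image
        (fun α : D => (α : F)) with hZ
      have hZcard : Z.card = (Finset.univ.filter fun α : D => ¬ u α ≠ c α).card :=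
        Finset.card_image_of_injective _ Subtype.val_injective
      have hroots : Z.val ⊆ g.roots := by
        intro x hx
        simp only [hZ, Finset.image_val, Multiset.mem_dedup, Multiset.mem_map,
          Finset.filter_val, Multiset.mem_filter] at hx
        obtain ⟨α, ⟨_, hα⟩, rfl⟩ := hx
        rw [Polynomial.mem_roots hg0]
        simp only [not_not] at hα
        simp [Polynomial.IsRoot, hg, hint α, hα, hcf α]
      have := Polynomial.card_le_degree_of_subset_roots hroots
      rw [hZcard] at this
      calc (Finset.univ.filter fun α : D => ¬ u α ≠ c α).card ≤ g.natDegree := this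
        _ = k := Polynomial.natDegree_eq_of_degree_eq_some hdegg
    have hH : hammingDist u c = (Finset.univ.filter fun α : D => u α ≠ c α).card := rfl
    have hsplit := Finset.card_filter_add_card_filter_not
      (s := (Finset.univ : Finset D)) (p := fun α : D => u α ≠ c α)
    simp only [Finset.card_univ, hcardD] at hsplit
    show D.card - k ≤ hammingDist u c
    omega
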